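/- If n and m are both even with 3 ≤ n ≤ m−2, then r(K_{1,n}, K_{1,m}+e) = n+m−1. -/

import Mathlib

open SimpleGraph

/-- `Contains G H` : the graph `G` contains a copy of `H`. -/
def Contains {V W : Type*} (G : SimpleGraph V) (H : SimpleGraph W) : Prop :=
  ∃ f : W → V, Function.Injective f ∧ ∀ a b, H.Adj a b → G.Adj (f a) (f b)

/-- The star `K_{1,n}` on `n+1` vertices: vertex `0` is joined to all others. -/
def starG (n : ℕ) : SimpleGraph (Fin (n + 1)) :=
  SimpleGraph.fromRel (fun a _ => a = 0)

/-- `K_{1,m}+e` on `m+1` vertices: vertex `0` joined to all others, plus the edge `{1,2}`. -/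
def starPlusE (m : ℕ) : SimpleGraph (Fin (m + 1)) :=
  SimpleGraph.fromRel (fun a b => a = 0 ∨ (a = 1 ∧ b = 2))

lemma starG_adj {n : ℕ} (a b : Fin (n+1)) :
    (starG n).Adj a b ↔ a ≠ b ∧ (a = 0 ∨ b = 0) := by
  simp only [starG, fromRel_adj]

lemma starPlusE_adj {m : ℕ} (a b : Fin (m+1)) :
    (starPlusE m).Adj a b ↔
      a ≠ b ∧ ((a = 0 ∨ (a = 1 ∧ b = 2)) ∨ (b = 0 ∨ (b = 1 ∧ a = 2))) := by
  simp only [starPlusE, fromRel_adj]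

lemma contains_star_of {V : Type*} {G : SimpleGraph V} {n : ℕ} {v : V} {s : Finset V}
    (hcard : s.card = n) (hv : v ∉ s) (hadj : ∀ w ∈ s, G.Adj v w) :
    Contains G (starG n) := by
  have e := s.equivFinOfCardEq hcard
  set g : Fin n → V := fun i => (e.symm i : V) with hg
  have hgs : ∀ i, g i ∈ s := fun i => (e.symm i).2
  refine ⟨Fin.cons v g, ?_, ?_⟩
  · rw [Fin.cons_injective_iff]
    refine ⟨?_, fun i j h => e.symm.injective (Subtype.ext h)⟩
    rintro ⟨i, hi⟩
    exact hv (hi ▸ hgs i)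
  · have key : ∀ b : Fin (n+1), b ≠ 0 → G.Adj v ((Fin.cons v g : Fin (n+1) → V) b) := by
      intro b hb
      induction b using Fin.cases with
      | zero => exact absurd rfl hb
      | succ j => rw [Fin.cons_succ]; exact hadj _ (hgs j)
    intro a b hab
    rw [starG_adj] at hab
    obtain ⟨hne, h0 | h0⟩ := hab
    · subst h0; rw [Fin.cons_zero]; exact key b (Ne.symm hne)
    · subst h0; rw [Fin.cons_zero]; exact (key a hne).symm

lemma star_of_contains {V : Type*} {G : SimpleGraph V} {n : ℕ}
    (h : Contains G (starG n)) :
    ∃ v : V, ∃ s : Finset V, s.card = n ∧ ∀ w ∈ s, G.Adj v w := by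
  classical
  obtain ⟨f, hinj, hadj⟩ := h
  refine ⟨f 0, (Finset.univ.erase 0).image f, ?_, ?_⟩
  · rw [Finset.card_image_of_injective _ hinj, Finset.card_erase_of_mem (Finset.mem_univ _),
      Finset.card_univ, Fintype.card_fin]
    omega
  · intro w hw
    simp only [Finset.mem_image, Finset.mem_erase] at hw
    obtain ⟨a, ⟨ha, -⟩, rfl⟩ := hw
    exact hadj 0 a (by rw [starG_adj]; exact ⟨Ne.symm ha, Or.inl rfl⟩)

lemma starPlusE_of_contains {V : Type*} {G : SimpleGraph V} {m : ℕ}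
    (h : Contains G (starPlusE m)) :
    ∃ v : V, ∃ s : Finset V, s.card = m ∧ ∀ w ∈ s, G.Adj v w := by
  classical
  obtain ⟨f, hinj, hadj⟩ := h
  refine ⟨f 0, (Finset.univ.erase 0).image f, ?_, ?_⟩
  · rw [Finset.card_image_of_injective _ hinj, Finset.card_erase_of_mem (Finset.mem_univ _),
      Finset.card_univ, Fintype.card_fin]
    omega
  · intro w hw
    simp only [Finset.mem_image, Finset.mem_erase] at hw
    obtain ⟨a, ⟨ha, -⟩, rfl⟩ := hw
    exact hadj 0 a (by rw [starPlusE_adj]; exact ⟨Ne.symm ha, Or.inl (Or.inl rfl)⟩)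

lemma contains_starPlusE_of {V : Type*} {G : SimpleGraph V} {m : ℕ} (hm : 2 ≤ m)
    {v u w : V} {s : Finset V}
    (hcard : s.card = m - 2)
    (hvu : G.Adj v u) (hvw : G.Adj v w) (huw : G.Adj u w)
    (hvs : v ∉ s) (hus : u ∉ s) (hws : w ∉ s)
    (hadj : ∀ x ∈ s, G.Adj v x) :
    Contains G (starPlusE m) := by
  obtain ⟨k, rfl⟩ : ∃ k, m = k + 2 := ⟨m - 2, by omega⟩
  have hcard' : s.card = k := by omega
  have e := s.equivFinOfCardEq hcard'
  set g : Fin k → V := fun i => (e.symm i : V) with hg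
  have hgs : ∀ i, g i ∈ s := fun i => (e.symm i).2
  set f : Fin (k+2+1) → V := Fin.cons v (Fin.cons u (Fin.cons w g)) with hf
  have hf0 : f 0 = v := rfl
  have hf1 : f 1 = u := by
    rw [hf, ← Fin.succ_zero_eq_one, Fin.cons_succ, Fin.cons_zero]
  have hf2 : f 2 = w := by
    rw [hf, ← Fin.succ_one_eq_two, Fin.cons_succ, ← Fin.succ_zero_eq_one, Fin.cons_succ,
      Fin.cons_zero]
  refine ⟨f, ?_, ?_⟩
  · rw [hf, Fin.cons_injective_iff]
    constructor
    · rw [Fin.range_cons, Fin.range_cons]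
      simp only [Set.mem_insert_iff, Set.mem_range]
      push_neg
      exact ⟨hvu.ne, hvw.ne, fun i h => hvs (h ▸ hgs i)⟩
    rw [Fin.cons_injective_iff]
    constructor
    · rw [Fin.range_cons]
      simp only [Set.mem_insert_iff, Set.mem_range]
      push_neg
      exact ⟨huw.ne, fun i h => hus (h ▸ hgs i)⟩
    rw [Fin.cons_injective_iff]
    refine ⟨?_, fun i j h => e.symm.injective (Subtype.ext h)⟩
    simp only [Set.mem_range]
    push_neg
    exact fun i h => hws (h ▸ hgs i)
  · have key : ∀ b : Fin (k+2+1), b ≠ 0 → G.Adj v (f b) := by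
      intro b hb
      induction b using Fin.cases with
      | zero => exact absurd rfl hb
      | succ j =>
        induction j using Fin.cases with
        | zero =>
          have : f (Fin.succ 0) = u := by rw [hf, Fin.cons_succ, Fin.cons_zero]
          rw [this]; exact hvu
        | succ l =>
          induction l using Fin.cases with
          | zero =>
            have : f (Fin.succ (Fin.succ 0)) = w := by
              rw [hf, Fin.cons_succ, Fin.cons_succ, Fin.cons_zero]
            rw [this]; exact hvw
          | succ i =>
            have : f (Fin.succ (Fin.succ (Fin.succ i))) = g i := by
              rw [hf, Fin.cons_succ, Fin.cons_succ, Fin.cons_succ]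
            rw [this]; exact hadj _ (hgs i)
    intro a b hab
    rw [starPlusE_adj] at hab
    obtain ⟨hne, h⟩ := hab
    rcases h with (h0 | ⟨h1, h2⟩) | (h0 | ⟨h1, h2⟩)
    · subst h0; rw [hf0]; exact key b (Ne.symm hne)
    · subst h1; subst h2; rw [hf1, hf2]; exact huw
    · subst h0; rw [hf0]; exact (key a hne).symm
    · subst h1; subst h2; rw [hf1, hf2]; exact huw.symm

/-- circular distance from `a` to `b` (going upwards). -/
def dd (N : ℕ) (a b : Fin N) : ℕ :=
  if a.val ≤ b.val then b.val - a.val else b.val + N - a.val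

def circ (N k : ℕ) : SimpleGraph (Fin N) where
  Adj a b := a ≠ b ∧ (dd N a b ≤ k ∨ dd N b a ≤ k)
  symm := ⟨fun a b h => ⟨h.1.symm, h.2.symm⟩⟩
  loopless := ⟨fun a h => h.1 rfl⟩

instance (N k : ℕ) : DecidableRel (circ N k).Adj :=
  fun a b => inferInstanceAs (Decidable (a ≠ b ∧ (dd N a b ≤ k ∨ dd N b a ≤ k)))

lemma circ_adj {N k : ℕ} (a b : Fin N) :
    (circ N k).Adj a b ↔ a ≠ b ∧ (dd N a b ≤ k ∨ dd N b a ≤ k) := Iff.rfl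

lemma dd_basic {N : ℕ} (a b : Fin N) (h : a ≠ b) :
    1 ≤ dd N a b ∧ dd N a b ≤ N - 1 ∧ dd N a b + dd N b a = N := by
  have ha := a.is_lt
  have hb := b.is_lt
  have hne : a.val ≠ b.val := fun hv => h (Fin.ext hv)
  simp only [dd]
  split_ifs <;> omega

lemma circ_degree (N k : ℕ) [inst : DecidableRel (circ N k).Adj] (hk : 2*k + 1 ≤ N)
    (v : Fin N) : (circ N k).degree v = 2*k := by
  have hvN := v.is_lt
  have hT : ((Finset.Icc 1 k) ∪ (Finset.Icc (N-k) (N-1))).card = 2*k := by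
    rw [Finset.card_union_of_disjoint, Nat.card_Icc, Nat.card_Icc]
    · omega
    · rw [Finset.disjoint_left]
      intro a ha hb
      simp only [Finset.mem_Icc] at ha hb
      omega
  rw [show (circ N k).degree v = ((circ N k).neighborFinset v).card from rfl, ← hT]
  refine Finset.card_bij' (fun w _ => dd N v w)
    (fun d hd => (⟨if v.val + d < N then v.val + d else v.val + d - N, by
      simp only [Finset.mem_union, Finset.mem_Icc] at hd
      split <;> omega⟩ : Fin N)) ?hi ?hj ?hleft ?hright
  case hi =>
    intro w hw
    rw [mem_neighborFinset, circ_adj] at hw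
    obtain ⟨hne, hor⟩ := hw
    obtain ⟨h1, h2, h3⟩ := dd_basic v w hne
    simp only [Finset.mem_union, Finset.mem_Icc]
    omega
  case hj =>
    intro d hd
    simp only [Finset.mem_union, Finset.mem_Icc] at hd
    rw [mem_neighborFinset, circ_adj]
    have hd1 : 1 ≤ d := by omega
    have hdN : d ≤ N - 1 := by omega
    constructor
    · intro hEq
      have := congrArg Fin.val hEq
      simp only at this
      split_ifs at this <;> omega
    · have hdd : dd N v ⟨if v.val + d < N then v.val + d else v.val + d - N, by
          split <;> omega⟩ = d := by
        simp only [dd]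
        split_ifs <;> omega
      have hdd2 : dd N (⟨if v.val + d < N then v.val + d else v.val + d - N, by
          split <;> omega⟩ : Fin N) v = N - d := by
        simp only [dd]
        split_ifs <;> omega
      rw [hdd, hdd2]
      omega
  case hleft =>
    intro w hw
    have hwN := w.is_lt
    apply Fin.ext
    show (if v.val + dd N v w < N then v.val + dd N v w else v.val + dd N v w - N) = w.val
    simp only [dd]
    split_ifs <;> omega
  case hright =>
    intro d hd
    simp only [Finset.mem_union, Finset.mem_Icc] at hd
    show dd N v ⟨if v.val + d < N then v.val + d else v.val + d - N, _⟩ = d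
    simp only [dd]
    split_ifs <;> omega


theorem stmt_2 (n m : ℕ) (hne : Even n) (hme : Even m) (hn : 3 ≤ n) (hnm : n + 2 ≤ m) :
    IsLeast {N : ℕ | ∀ R : SimpleGraph (Fin N),
      Contains R (starG n) ∨ Contains Rᶜ (starPlusE m)} (n + m - 1) := by
  classical
  constructor
  · intro R
    by_cases hred : ∃ v, n ≤ R.degree v
    · left
      obtain ⟨v, hv⟩ := hred
      obtain ⟨s, hsub, hscard⟩ := Finset.exists_subset_card_eq
        (show n ≤ (R.neighborFinset v).card from hv)
      have hadj : ∀ w ∈ s, R.Adj v w := fun w hw => by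
        have := hsub hw; rwa [mem_neighborFinset] at this
      have hv' : v ∉ s := fun hmem => R.irrefl (hadj v hmem)
      exact contains_star_of hscard hv' hadj
    · by_cases hblue : ∃ v, R.degree v + 2 ≤ n
      · obtain ⟨v, hv⟩ := hblue
        have hdc : m ≤ Rᶜ.degree v := by
          rw [SimpleGraph.degree_compl, Fintype.card_fin]
          omega
        have hdc' : m ≤ (Rᶜ.neighborFinset v).card := hdc
        by_cases hpair : ∃ u ∈ Rᶜ.neighborFinset v, ∃ w ∈ Rᶜ.neighborFinset v, Rᶜ.Adj u w
        · right
          obtain ⟨u, hu, w, hw, huw⟩ := hpair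
          have hvu : Rᶜ.Adj v u := (mem_neighborFinset _ _ _).1 hu
          have hvw : Rᶜ.Adj v w := (mem_neighborFinset _ _ _).1 hw
          have hwB : w ∈ (Rᶜ.neighborFinset v).erase u :=
            Finset.mem_erase.2 ⟨huw.ne', hw⟩
          have hcard2 : m - 2 ≤ (((Rᶜ.neighborFinset v).erase u).erase w).card := by
            rw [Finset.card_erase_of_mem hwB, Finset.card_erase_of_mem hu]
            omega
          obtain ⟨s, hsub, hscard⟩ := Finset.exists_subset_card_eq hcard2
          have hadjs : ∀ x ∈ s, Rᶜ.Adj v x := fun x hx =>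
            (mem_neighborFinset _ _ _).1
              (Finset.mem_of_mem_erase (Finset.mem_of_mem_erase (hsub hx)))
          refine contains_starPlusE_of (by omega) hscard hvu hvw huw ?_ ?_ ?_ hadjs
          · intro hmem; exact Rᶜ.irrefl (hadjs v hmem)
          · intro hmem
            exact (Finset.mem_erase.1 (Finset.mem_of_mem_erase (hsub hmem))).1 rfl
          · intro hmem; exact (Finset.mem_erase.1 (hsub hmem)).1 rfl
        · left
          push_neg at hpair
          obtain ⟨u, hu⟩ : (Rᶜ.neighborFinset v).Nonempty :=
            Finset.card_pos.mp (by omega)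
          have hcard2 : n ≤ ((Rᶜ.neighborFinset v).erase u).card := by
            rw [Finset.card_erase_of_mem hu]; omega
          obtain ⟨s, hsub, hscard⟩ := Finset.exists_subset_card_eq hcard2
          have hadjs : ∀ x ∈ s, R.Adj u x := by
            intro x hx
            have hx' := Finset.mem_erase.1 (hsub hx)
            have hnadj := hpair u hu x hx'.2
            rw [compl_adj] at hnadj
            push_neg at hnadj
            exact hnadj (Ne.symm hx'.1)
          refine contains_star_of hscard (fun hmem => ?_) hadjs
          exact (Finset.mem_erase.1 (hsub hmem)).1 rfl
      · exfalso
        push_neg at hred hblue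
        have hdeg : ∀ v : Fin (n+m-1), R.degree v = n - 1 := fun v => by
          have h1 := hred v; have h2 := hblue v; omega
        have hsum := R.sum_degrees_eq_twice_card_edges
        rw [Finset.sum_congr rfl (fun v _ => hdeg v), Finset.sum_const, Finset.card_univ,
          Fintype.card_fin, smul_eq_mul] at hsum
        rw [Nat.even_iff] at hne hme
        have h1 : (n + m - 1) % 2 = 1 := by omega
        have h2 : (n - 1) % 2 = 1 := by omega
        have h3 := Nat.mul_mod (n+m-1) (n-1) 2
        rw [h1, h2] at h3
        omega
  · intro N hN
    simp only [Set.mem_setOf_eq] at hN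
    by_contra hcon
    push_neg at hcon
    by_cases hsmall : N ≤ n
    · rcases hN ⊤ with h | h
      · obtain ⟨f, hinj, -⟩ := h
        have hcard := Fintype.card_le_of_injective f hinj
        simp only [Fintype.card_fin] at hcard
        omega
      · obtain ⟨f, hinj, hadj⟩ := h
        have h01 : (starPlusE m).Adj 0 1 := by
          rw [starPlusE_adj]
          refine ⟨?_, Or.inl (Or.inl rfl)⟩
          intro h
          have h' := congrArg Fin.val h
          rw [Fin.val_zero, Fin.val_one'] at h'
          rw [Nat.mod_eq_of_lt (by omega)] at h'
          exact absurd h'.symm one_ne_zero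
        have hcontr := hadj 0 1 h01
        simp only [compl_adj, top_adj] at hcontr
        exact hcontr.2 hcontr.1
    · push_neg at hsmall
      obtain ⟨a, ha⟩ := hne
      have hk2 : 2*(a-1) + 1 ≤ N := by omega
      rcases hN (circ N (a-1)) with h | h
      · obtain ⟨v, s, hscard, hsadj⟩ := star_of_contains h
        have hsub : s ⊆ (circ N (a-1)).neighborFinset v := fun w hw =>
          (mem_neighborFinset _ _ _).2 (hsadj w hw)
        have hle := Finset.card_le_card hsub
        rw [hscard, show ((circ N (a-1)).neighborFinset v).card = (circ N (a-1)).degree v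
          from rfl, circ_degree N (a-1) hk2 v] at hle
        omega
      · obtain ⟨v, s, hscard, hsadj⟩ := starPlusE_of_contains h
        have hsub : s ⊆ (circ N (a-1))ᶜ.neighborFinset v := fun w hw =>
          (mem_neighborFinset _ _ _).2 (hsadj w hw)
        have hle := Finset.card_le_card hsub
        have hdc : (circ N (a-1))ᶜ.degree v = N - 1 - 2*(a-1) := by
          rw [SimpleGraph.degree_compl, Fintype.card_fin, circ_degree N (a-1) hk2 v]
        rw [hscard, show ((circ N (a-1))ᶜ.neighborFinset v).card = (circ N (a-1))ᶜ.degree v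
          from rfl, hdc] at hle
        omega
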